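/- For every integer k ≥ 2, every real δ ∈ (0,1) and every real α ≥ 1 there exist a natural number n₀ = n₀(k,δ,α) and a real constant C = C(k,δ,α) > 0 with the following property. Let n ≥ n₀, let 1 ≤ t₁ < t₂ < … < t_k be real numbers such that for all indices 1 ≤ ℓ₁ ≤ ℓ₂ < ℓ₃ ≤ k one has t_{ℓ₃} ∉ [(1−δ)(t_{ℓ₁}+t_{ℓ₂}), t_{ℓ₁}+t_{ℓ₂}+2α], and let P ⊂ ℝ² be a separated set with |P| = n. Then the number of unordered pairs {p,q} of distinct points of P whose Euclidean distance lies in ⋃_{ℓ=1}^k [t_ℓ, t_ℓ+α] is at most n²/4 + C·n. -/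

import Mathlib

open Finset
set_option maxHeartbeats 1000000


local notation "Pt" => EuclideanSpace ℝ (Fin 2)

lemma dist_sq_eq (w z : Pt) : (dist w z)^2 = (w 0 - z 0)^2 + (w 1 - z 1)^2 := by
  rw [EuclideanSpace.dist_eq, Real.sq_sqrt (by positivity), Fin.sum_univ_two]
  simp [Real.dist_eq, sq_abs]

lemma coord_le_dist (w z : Pt) (i : Fin 2) : |w i - z i| ≤ dist w z := by
  have h := dist_sq_eq w z
  have h2 : (w i - z i)^2 ≤ (dist w z)^2 := by
    have : i = 0 ∨ i = 1 := by omega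
    rcases this with rfl | rfl <;> nlinarith [sq_nonneg (w 0 - z 0), sq_nonneg (w 1 - z 1)]
  calc |w i - z i| = Real.sqrt ((w i - z i)^2) := (Real.sqrt_sq_eq_abs _).symm
    _ ≤ Real.sqrt ((dist w z)^2) := Real.sqrt_le_sqrt h2
    _ = dist w z := Real.sqrt_sq dist_nonneg

lemma floor_abs_lt (a b : ℝ) (h : ⌊a⌋ = ⌊b⌋) : |a - b| < 1 := by
  have h1 := Int.floor_le a
  have h2 := Int.lt_floor_add_one a
  have h3 := Int.floor_le b
  have h4 := Int.lt_floor_add_one b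
  rw [h] at h1 h2
  rw [abs_lt]; constructor <;> linarith

lemma pack_lemma (z : Pt) (R : ℝ) (Q : Finset Pt)
    (hsep : ∀ p ∈ Q, ∀ q ∈ Q, p ≠ q → 1 ≤ dist p q)
    (hball : ∀ p ∈ Q, dist p z ≤ R) : (Q.card : ℝ) ≤ (4*R+3)^2 := by
  rcases Q.eq_empty_or_nonempty with rfl | ⟨w₀, hw₀⟩
  · simp; positivity
  have hR : 0 ≤ R := le_trans dist_nonneg (hball w₀ hw₀)
  set f : Pt → ℤ × ℤ := fun w => (⌊2 * w 0⌋, ⌊2 * w 1⌋) with hf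
  have hinj : Set.InjOn f Q := by
    intro p hp q hq hpq
    by_contra hne
    have hd := hsep p hp q hq hne
    have h0 : |2 * p 0 - 2 * q 0| < 1 := floor_abs_lt _ _ (congrArg Prod.fst hpq)
    have h1 : |2 * p 1 - 2 * q 1| < 1 := floor_abs_lt _ _ (congrArg Prod.snd hpq)
    rw [abs_lt] at h0 h1
    have := dist_sq_eq p q
    nlinarith [dist_nonneg (x := p) (y := q)]
  set I : Fin 2 → Finset ℤ := fun i => Finset.Icc ⌊2 * z i - 2*R⌋ ⌊2 * z i + 2*R⌋ with hI
  have hmaps : ∀ w ∈ Q, f w ∈ (I 0) ×ˢ (I 1) := by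
    intro w hw
    have hb := hball w hw
    simp only [Finset.mem_product, hI, Finset.mem_Icc, hf]
    have h0 := coord_le_dist w z 0
    have h1 := coord_le_dist w z 1
    rw [abs_le] at h0 h1
    refine ⟨⟨Int.floor_le_floor (by linarith [h0.1, h0.2]), Int.floor_le_floor (by linarith [h0.1, h0.2])⟩,
      Int.floor_le_floor (by linarith [h1.1, h1.2]), Int.floor_le_floor (by linarith [h1.1, h1.2])⟩
  have hcard : Q.card ≤ ((I 0) ×ˢ (I 1)).card := Finset.card_le_card_of_injOn f hmaps hinj
  have hIcard : ∀ i : Fin 2, ((I i).card : ℝ) ≤ 4*R + 2 := by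
    intro i
    rw [hI]
    simp only [Int.card_Icc]
    have h1 := Int.floor_le (2 * z i + 2*R)
    have h2 := Int.lt_floor_add_one (2 * z i - 2*R)
    have : (((⌊2 * z i + 2*R⌋ + 1 - ⌊2 * z i - 2*R⌋ : ℤ).toNat : ℤ) : ℝ) ≤ 4*R+2 := by
      rw [Int.toNat_eq_max, Int.cast_max]
      apply max_le
      · push_cast; linarith
      · norm_num; linarith
    exact_mod_cast this
  calc (Q.card : ℝ) ≤ (((I 0) ×ˢ (I 1)).card : ℝ) := by exact_mod_cast hcard
    _ = ((I 0).card : ℝ) * ((I 1).card : ℝ) := by rw [Finset.card_product]; push_cast; ring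
    _ ≤ (4*R+2) * (4*R+2) := by
        apply mul_le_mul (hIcard 0) (hIcard 1) (by positivity) (by linarith)
    _ ≤ (4*R+3)^2 := by nlinarith


-- margins
lemma arith_margins (δ α Tb Tc Ta d r1 r2 : ℝ)
    (hδ0 : 0 < δ) (hδ1 : δ < 1) (hα : 1 ≤ α) (hTb1 : 1 ≤ Tb)
    (hbc : Tb ≤ Tc) (hca : Tc ≤ Ta)
    (hδTb : 4*α+2 < δ*Tb)
    (hd1 : Ta ≤ d) (hd2 : d ≤ Ta + α)
    (hr1a : Tb ≤ r1) (hr1b : r1 ≤ Tb + α)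
    (hr2a : Tc ≤ r2) (hr2b : r2 ≤ Tc + α)
    (htri : d ≤ r1 + r2)
    (hgap : Tc = Ta ∨ Ta < (1-δ)*(Tb+Tc) ∨ Tb+Tc+2*α < Ta) :
    Tb/2 ≤ d + r1 - r2 ∧ Tc/2 ≤ d + r2 - r1 ∧ δ*Tb/2 ≤ r1 + r2 - d ∧ d ≤ 3*Tc := by
  have hTb4 : 4*α + 2 < Tb := by nlinarith
  have hδbb : δ*Tb ≤ Tb := by nlinarith
  refine ⟨by linarith, by linarith, ?_, ?_⟩
  · rcases hgap with hg | hg | hg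
    · linarith
    · have hδc : δ*Tb ≤ δ*Tc := by nlinarith
      nlinarith
    · linarith
  · rcases hgap with hg | hg | hg
    · linarith
    · nlinarith [mul_nonneg hδ0.le (by linarith : (0:ℝ) ≤ Tb + Tc)]
    · linarith

-- lower bound for y^2
lemma arith_ylb (δ Tb Tc d r1 r2 y2 : ℝ)
    (hδ0 : 0 < δ) (hδ1 : δ < 1) (hTb1 : 1 ≤ Tb) (hbc : Tb ≤ Tc)
    (hd1 : 1 ≤ d) (hd3 : d ≤ 3*Tc)
    (hr1n : 0 ≤ r1) (hr2n : 0 ≤ r2)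
    (hs1 : Tb/2 ≤ d + r1 - r2) (hs2 : Tc/2 ≤ d + r2 - r1) (hs3 : δ*Tb/2 ≤ r1 + r2 - d)
    (heq : 4*d^2*y2 = (d + r1 + r2)*(d + r1 - r2)*(d + r2 - r1)*(r1 + r2 - d)) :
    (δ*Tb/10)^2 ≤ y2 := by
  have hTbp : (0:ℝ) < Tb := by linarith
  have hTcp : (0:ℝ) < Tc := by linarith
  have hdp : (0:ℝ) < d := by linarith
  have n0 : (0:ℝ) ≤ (δ*Tb/2)*d := mul_nonneg (by positivity) hdp.le
  have n1 : (0:ℝ) ≤ (Tc/2)*((δ*Tb/2)*d) := mul_nonneg (by positivity) n0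
  have s1p : (0:ℝ) < d + r1 - r2 := by nlinarith
  have s2p : (0:ℝ) < d + r2 - r1 := by nlinarith
  have s3p : (0:ℝ) < r1 + r2 - d := by nlinarith
  have inner2 : (δ*Tb/2)*d ≤ (r1 + r2 - d)*(d + r1 + r2) := by
    have h1 : d ≤ d + r1 + r2 := by linarith
    exact mul_le_mul hs3 h1 hdp.le s3p.le
  have inner1 : (Tc/2)*((δ*Tb/2)*d) ≤ (d + r2 - r1)*((r1 + r2 - d)*(d + r1 + r2)) :=
    mul_le_mul hs2 inner2 n0 s2p.le
  have LB : (Tb/2)*((Tc/2)*((δ*Tb/2)*d)) ≤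
      (d + r1 - r2)*((d + r2 - r1)*((r1 + r2 - d)*(d + r1 + r2))) :=
    mul_le_mul hs1 inner1 n1 s1p.le
  have LB2 : (Tb/2)*((Tc/2)*((δ*Tb/2)*d)) ≤ 4*d^2*y2 := by
    refine LB.trans (le_of_eq ?_)
    rw [heq]; ring
  have h1 : 8*(δ*d) ≤ 25*Tc := by nlinarith [mul_le_mul_of_nonneg_left hd3 hδ0.le]
  have hmul := mul_le_mul_of_nonneg_left h1 (show (0:ℝ) ≤ δ*Tb^2*d/200 by positivity)
  have hstep : 4*d^2*((δ*Tb/10)^2) ≤ 4*d^2*y2 := by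
    refine le_trans ?_ LB2
    nlinarith [hmul]
  exact le_of_mul_le_mul_left hstep (by positivity)

-- x window
lemma arith_xwin (α Tb Tc d r1 r2 r1' r2' xx : ℝ)
    (hα : 1 ≤ α) (hTb1 : 1 ≤ Tb) (hbc : Tb ≤ Tc)
    (hTbd : Tb ≤ d) (hTcd : Tc ≤ d) (hd1 : 1 ≤ d)
    (hr1a : Tb ≤ r1) (hr1b : r1 ≤ Tb + α) (hr2a : Tc ≤ r2) (hr2b : r2 ≤ Tc + α)
    (hr1a' : Tb ≤ r1') (hr1b' : r1' ≤ Tb + α) (hr2a' : Tc ≤ r2') (hr2b' : r2' ≤ Tc + α)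
    (heq : xx*(2*d) = (r1^2 - r1'^2) - (r2^2 - r2'^2)) :
    |xx| ≤ 2*α + α^2 := by
  have hdp : (0:ℝ) < 2*d := by linarith
  have hb1 : r1^2 - r1'^2 ≤ 2*α*Tb + α^2 := by nlinarith
  have hb2 : r1'^2 - r1^2 ≤ 2*α*Tb + α^2 := by nlinarith
  have hb3 : r2^2 - r2'^2 ≤ 2*α*Tc + α^2 := by nlinarith
  have hb4 : r2'^2 - r2^2 ≤ 2*α*Tc + α^2 := by nlinarith
  have hc : 2*α*Tb + α^2 + (2*α*Tc + α^2) ≤ (2*α + α^2)*(2*d) := by nlinarith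
  rw [abs_le]
  constructor
  · have h2 : (-(2*α + α^2))*(2*d) ≤ xx*(2*d) := by rw [heq]; nlinarith
    exact le_of_mul_le_mul_right h2 hdp
  · have h2 : xx*(2*d) ≤ (2*α + α^2)*(2*d) := by rw [heq]; nlinarith
    exact le_of_mul_le_mul_right h2 hdp

-- |y^2 - y'^2| window
lemma arith_yabs (α Tb y2 y2' r1 r1' x x' : ℝ)
    (hα : 1 ≤ α) (hTb1 : 1 ≤ Tb)
    (hr1a : Tb ≤ r1) (hr1b : r1 ≤ Tb + α) (hr1a' : Tb ≤ r1') (hr1b' : r1' ≤ Tb + α)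
    (hx : |x| ≤ Tb + α) (hx' : |x'| ≤ Tb + α) (hdx : |x - x'| ≤ 2*α + α^2)
    (heq : y2 - y2' = (r1^2 - r1'^2) - (x^2 - x'^2)) :
    |y2 - y2'| ≤ (2*α + α^2 + 2*(1+α)*(2*α + α^2))*Tb := by
  have h3 : |x^2 - x'^2| ≤ (2*(Tb+α))*(2*α + α^2) := by
    have he : x^2 - x'^2 = (x + x')*(x - x') := by ring
    rw [he, abs_mul]
    apply mul_le_mul (le_trans (abs_add_le _ _) (by linarith)) hdx (abs_nonneg _) (by linarith)
  have h4 : |r1^2 - r1'^2| ≤ 2*α*Tb + α^2 := by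
    rw [abs_le]; constructor <;> nlinarith
  have h6 : |y2 - y2'| ≤ |r1^2 - r1'^2| + |x^2 - x'^2| := by
    rw [heq]; exact abs_sub _ _
  have hq : (2*(Tb+α))*(2*α + α^2) ≤ 2*(1+α)*(2*α + α^2)*Tb := by
    nlinarith [mul_nonneg (show (0:ℝ) ≤ 2*α+α^2 by nlinarith) (show (0:ℝ) ≤ α*(Tb-1) by nlinarith)]
  have hq2 : 2*α*Tb + α^2 ≤ (2*α + α^2)*Tb := by nlinarith
  linarith

-- y window from same sign
lemma arith_ywin (δ Tb C y y' : ℝ)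
    (hδ0 : 0 < δ) (hδ1 : δ < 1) (hTb1 : 1 ≤ Tb) (hC : 0 ≤ C)
    (h1 : |y^2 - y'^2| ≤ C*Tb)
    (hy : (δ*Tb/10)^2 ≤ y^2) (hy' : (δ*Tb/10)^2 ≤ y'^2)
    (hsign : 0 ≤ y*y') :
    (y - y')^2 ≤ (8*C/δ)^2 := by
  have habs2 := abs_le.mp h1
  have hsum2 : 2*((δ*Tb/10)^2) ≤ (y + y')^2 := by nlinarith
  have e1 : (y - y')^2*(y + y')^2 = (y^2 - y'^2)^2 := by ring
  have h7 : (y - y')^2 * (2*((δ*Tb/10)^2)) ≤ (C*Tb)^2 := by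
    calc (y - y')^2 * (2*((δ*Tb/10)^2)) ≤ (y - y')^2 * (y + y')^2 :=
          mul_le_mul_of_nonneg_left hsum2 (sq_nonneg _)
      _ = (y^2 - y'^2)^2 := e1
      _ ≤ (C*Tb)^2 := sq_le_sq' habs2.1 habs2.2
  have h8 : (C*Tb)^2 ≤ (8*C/δ)^2 * (2*((δ*Tb/10)^2)) := by
    have he2 : (8*C/δ)^2*(2*((δ*Tb/10)^2)) = (128/100)*(C*Tb)^2 := by
      field_simp; ring
    rw [he2]
    nlinarith [sq_nonneg (C*Tb)]
  have hpos2 : (0:ℝ) < 2*((δ*Tb/10)^2) := by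
    have : (0:ℝ) < δ*Tb := mul_pos hδ0 (by linarith)
    positivity
  exact le_of_mul_le_mul_right (h7.trans h8) hpos2

lemma arith_xabs (x y r1 Tb α : ℝ) (heq : r1^2 = x^2 + y^2) (hr1b : r1 ≤ Tb + α)
    (h0 : 0 ≤ r1) : |x| ≤ Tb + α := by
  have h2 : x^2 ≤ (Tb+α)^2 := by nlinarith [sq_nonneg y]
  calc |x| = Real.sqrt (x^2) := (Real.sqrt_sq_eq_abs _).symm
    _ ≤ Real.sqrt ((Tb+α)^2) := Real.sqrt_le_sqrt h2
    _ = Tb + α := Real.sqrt_sq (by linarith)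

lemma arith_diam (dx dy X0 Y0 D : ℝ) (h1 : |dx| ≤ X0) (h2 : dy^2 ≤ Y0^2)
    (hX0 : 0 ≤ X0) (hY0 : 0 ≤ Y0) (heq : D^2 = dx^2 + dy^2) (hD : 0 ≤ D) :
    D ≤ X0 + Y0 := by
  have h1' := abs_le.mp h1
  have h3 : D^2 ≤ (X0 + Y0)^2 := by nlinarith [mul_nonneg hX0 hY0, h1'.1, h1'.2]
  nlinarith

noncomputable def cX0 (α : ℝ) : ℝ := 2*α + α^2
noncomputable def cC3 (α : ℝ) : ℝ := 2*α + α^2 + 2*(1+α)*(2*α + α^2)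
noncomputable def cY0 (δ α : ℝ) : ℝ := 8*(cC3 α)/δ
noncomputable def cR (δ α : ℝ) : ℝ := (4*α+2)/δ + 4*α + α^2 + 8*(cC3 α)/δ
noncomputable def cLam (δ α : ℝ) : ℝ := 2*(4*(cR δ α)+3)^2

lemma cLam_nonneg (δ α : ℝ) : 0 ≤ cLam δ α := by unfold cLam; positivity

lemma cC3_nonneg {α : ℝ} (hα : 1 ≤ α) : 0 ≤ cC3 α := by unfold cC3; nlinarith
lemma cX0_nonneg {α : ℝ} (hα : 1 ≤ α) : 0 ≤ cX0 α := by unfold cX0; nlinarith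

lemma cap (δ α Tb Tc Ta : ℝ) (hδ0 : 0 < δ) (hδ1 : δ < 1) (hα : 1 ≤ α)
    (hTb1 : 1 ≤ Tb) (hbc : Tb ≤ Tc) (hca : Tc ≤ Ta)
    (hgap : Tc = Ta ∨ Ta < (1-δ)*(Tb+Tc) ∨ Tb+Tc+2*α < Ta)
    (u v : Pt) (hd : dist u v ∈ Set.Icc Ta (Ta+α))
    (Q : Finset Pt)
    (hsep : ∀ p ∈ Q, ∀ q ∈ Q, p ≠ q → 1 ≤ dist p q)
    (hQ : ∀ w ∈ Q, dist w u ∈ Set.Icc Tb (Tb+α) ∧ dist w v ∈ Set.Icc Tc (Tc+α)) :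
    (Q.card : ℝ) ≤ cLam δ α := by
  have hC3 : 0 ≤ cC3 α := cC3_nonneg hα
  have hX0n : 0 ≤ cX0 α := cX0_nonneg hα
  have hY0n : (0:ℝ) ≤ cY0 δ α := div_nonneg (by linarith) hδ0.le
  have hsq : (0:ℝ) ≤ (4*(cR δ α)+3)^2 := sq_nonneg _
  by_cases hsmall : Tb ≤ (4*α+2)/δ
  · have hball : ∀ p ∈ Q, dist p u ≤ cR δ α := by
      intro p hp
      have h1 := (hQ p hp).1.2
      have h2 : Tb + α ≤ cR δ α := by
        unfold cR
        have h3 : (0:ℝ) ≤ 8*(cC3 α)/δ := div_nonneg (by linarith) hδ0.le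
        nlinarith
      linarith
    calc (Q.card : ℝ) ≤ (4*(cR δ α)+3)^2 := pack_lemma u (cR δ α) Q hsep hball
      _ ≤ cLam δ α := by unfold cLam; nlinarith
  · push_neg at hsmall
    have hδTb : 4*α+2 < δ*Tb := by
      rw [div_lt_iff₀ hδ0] at hsmall; linarith [hsmall]
    set d := dist u v with hdd
    have hdTa : Ta ≤ d := hd.1
    have hdTa2 : d ≤ Ta + α := hd.2
    have hTb4 : 4*α + 2 < Tb := by nlinarith
    have hd1 : 1 ≤ d := by linarith
    have hdpos : (0:ℝ) < d := by linarith
    set e0 : ℝ := (v 0 - u 0)/d with he0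
    set e1 : ℝ := (v 1 - u 1)/d with he1
    have hduv2 : d^2 = (v 0 - u 0)^2 + (v 1 - u 1)^2 := by
      rw [hdd, dist_sq_eq u v]; ring
    have hv0 : v 0 - u 0 = d * e0 := by rw [he0]; field_simp
    have hv1 : v 1 - u 1 = d * e1 := by rw [he1]; field_simp
    have hee : e0^2 + e1^2 = 1 := by
      rw [he0, he1]
      field_simp
      linarith [hduv2]
    set X : Pt → ℝ := fun w => (w 0 - u 0)*e0 + (w 1 - u 1)*e1 with hX
    set Y : Pt → ℝ := fun w => -(w 0 - u 0)*e1 + (w 1 - u 1)*e0 with hY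
    have key1 : ∀ w : Pt, (dist w u)^2 = X w^2 + Y w^2 := by
      intro w
      rw [dist_sq_eq, hX, hY]
      simp only
      linear_combination (-((w 0 - u 0)^2 + (w 1 - u 1)^2)) * hee
    have key2 : ∀ w : Pt, (dist w v)^2 = (X w - d)^2 + Y w^2 := by
      intro w
      have h0 : w 0 - v 0 = (w 0 - u 0) - d*e0 := by rw [← hv0]; ring
      have h1 : w 1 - v 1 = (w 1 - u 1) - d*e1 := by rw [← hv1]; ring
      rw [dist_sq_eq, h0, h1, hX, hY]
      simp only
      linear_combination (d^2 - (w 0 - u 0)^2 - (w 1 - u 1)^2) * hee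
    have key3 : ∀ w w' : Pt, (dist w w')^2 = (X w - X w')^2 + (Y w - Y w')^2 := by
      intro w w'
      rw [dist_sq_eq, hX, hY]
      simp only
      linear_combination (-((w 0 - w' 0)^2 + (w 1 - w' 1)^2)) * hee
    have hX2d : ∀ w : Pt, X w * (2*d) = (dist w u)^2 - (dist w v)^2 + d^2 := by
      intro w
      linear_combination (key2 w) - (key1 w)
    have hmarg : ∀ w ∈ Q, Tb/2 ≤ d + dist w u - dist w v ∧ Tc/2 ≤ d + dist w v - dist w u ∧
        δ*Tb/2 ≤ dist w u + dist w v - d ∧ d ≤ 3*Tc := by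
      intro w hw
      obtain ⟨⟨hr1l, hr1u⟩, ⟨hr2l, hr2u⟩⟩ := hQ w hw
      have htri : d ≤ dist w u + dist w v := by
        rw [hdd, dist_comm w u]
        exact dist_triangle u w v
      exact arith_margins δ α Tb Tc Ta d (dist w u) (dist w v) hδ0 hδ1 hα hTb1 hbc hca hδTb
        hdTa hdTa2 hr1l hr1u hr2l hr2u htri hgap
    have hfact : ∀ w : Pt, 4*d^2*(Y w)^2 =
        (d + dist w u + dist w v)*(d + dist w u - dist w v)*(d + dist w v - dist w u)*(dist w u + dist w v - d) := by
      intro w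
      have hy2 : (Y w)^2 = (dist w u)^2 - (X w)^2 := by linarith [key1 w]
      rw [hy2]
      linear_combination (-(X w * (2*d) + ((dist w u)^2 - (dist w v)^2 + d^2))) * (hX2d w)
    have hylb : ∀ w ∈ Q, (δ*Tb/10)^2 ≤ (Y w)^2 := by
      intro w hw
      obtain ⟨hs1, hs2, hs3, hdw3⟩ := hmarg w hw
      exact arith_ylb δ Tb Tc d (dist w u) (dist w v) ((Y w)^2) hδ0 hδ1 hTb1 hbc hd1 hdw3
        dist_nonneg dist_nonneg hs1 hs2 hs3 (hfact w)
    have hXabs : ∀ w ∈ Q, |X w| ≤ Tb + α := by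
      intro w hw
      exact arith_xabs (X w) (Y w) (dist w u) Tb α (key1 w) (hQ w hw).1.2 dist_nonneg
    have hDX : ∀ w ∈ Q, ∀ w' ∈ Q, |X w - X w'| ≤ cX0 α := by
      intro w hw w' hw'
      obtain ⟨⟨hr1l, hr1u⟩, ⟨hr2l, hr2u⟩⟩ := hQ w hw
      obtain ⟨⟨hr1l', hr1u'⟩, ⟨hr2l', hr2u'⟩⟩ := hQ w' hw'
      have hEq : (X w - X w')*(2*d) = ((dist w u)^2 - (dist w' u)^2) - ((dist w v)^2 - (dist w' v)^2) := by
        linear_combination (hX2d w) - (hX2d w')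
      exact arith_xwin α Tb Tc d (dist w u) (dist w v) (dist w' u) (dist w' v) (X w - X w')
        hα hTb1 hbc (by linarith) (by linarith) hd1 hr1l hr1u hr2l hr2u hr1l' hr1u' hr2l' hr2u' hEq
    have hDY : ∀ w ∈ Q, ∀ w' ∈ Q, 0 ≤ Y w * Y w' → (Y w - Y w')^2 ≤ (cY0 δ α)^2 := by
      intro w hw w' hw' hsign
      obtain ⟨⟨hr1l, hr1u⟩, _⟩ := hQ w hw
      obtain ⟨⟨hr1l', hr1u'⟩, _⟩ := hQ w' hw'
      have heqY : (Y w)^2 - (Y w')^2 = ((dist w u)^2 - (dist w' u)^2) - ((X w)^2 - (X w')^2) := by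
        linarith [key1 w, key1 w']
      have habs := arith_yabs α Tb ((Y w)^2) ((Y w')^2) (dist w u) (dist w' u) (X w) (X w')
        hα hTb1 hr1l hr1u hr1l' hr1u' (hXabs w hw) (hXabs w' hw') (hDX w hw w' hw') heqY
      exact arith_ywin δ Tb (cC3 α) (Y w) (Y w') hδ0 hδ1 hTb1 hC3 habs (hylb w hw) (hylb w' hw') hsign
    have hdiam : ∀ w ∈ Q, ∀ w' ∈ Q, 0 ≤ Y w * Y w' → dist w w' ≤ cX0 α + cY0 δ α := by
      intro w hw w' hw' hsign
      exact arith_diam (X w - X w') (Y w - Y w') (cX0 α) (cY0 δ α) (dist w w')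
        (hDX w hw w' hw') (hDY w hw w' hw' hsign) hX0n hY0n (key3 w w') dist_nonneg
    classical
    set Qp := Q.filter (fun w => 0 ≤ Y w) with hQps
    set Qm := Q.filter (fun w => ¬ (0 ≤ Y w)) with hQms
    have hsplit : Qp.card + Qm.card = Q.card := Finset.card_filter_add_card_filter_not _
    have hcR : cX0 α + cY0 δ α ≤ cR δ α := by
      unfold cR cX0 cY0
      have h1 : (0:ℝ) < (4*α+2)/δ := by positivity
      nlinarith
    have hbp : (Qp.card : ℝ) ≤ (4*(cR δ α)+3)^2 := by
      rcases Qp.eq_empty_or_nonempty with h | ⟨w₁, hw₁⟩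
      · rw [h]; simpa using hsq
      · refine pack_lemma w₁ (cR δ α) Qp
          (fun p hp q hq hne => hsep p (Finset.mem_of_mem_filter p hp) q (Finset.mem_of_mem_filter q hq) hne) ?_
        intro p hp
        have hp' := Finset.mem_filter.mp hp
        have hw₁' := Finset.mem_filter.mp hw₁
        exact (hdiam p hp'.1 w₁ hw₁'.1 (mul_nonneg hp'.2 hw₁'.2)).trans hcR
    have hbm : (Qm.card : ℝ) ≤ (4*(cR δ α)+3)^2 := by
      rcases Qm.eq_empty_or_nonempty with h | ⟨w₁, hw₁⟩
      · rw [h]; simpa using hsq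
      · refine pack_lemma w₁ (cR δ α) Qm
          (fun p hp q hq hne => hsep p (Finset.mem_of_mem_filter p hp) q (Finset.mem_of_mem_filter q hq) hne) ?_
        intro p hp
        have hp' := Finset.mem_filter.mp hp
        have hw₁' := Finset.mem_filter.mp hw₁
        have hsign : 0 ≤ Y p * Y w₁ :=
          (mul_pos_of_neg_of_neg (lt_of_not_ge hp'.2) (lt_of_not_ge hw₁'.2)).le
        exact (hdiam p hp'.1 w₁ hw₁'.1 hsign).trans hcR
    have hcards : (Q.card : ℝ) = (Qp.card : ℝ) + (Qm.card : ℝ) := by exact_mod_cast hsplit.symm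
    rw [hcards]
    unfold cLam
    linarith

variable {V : Type*} [DecidableEq V]

lemma count_main (P : Finset V) (Adj : V → V → Prop) [DecidableRel Adj]
    (hsym : ∀ u v, Adj u v → Adj v u) (hirr : ∀ u, ¬ Adj u u)
    (Adm : V → V → V → Prop) [∀ u v, DecidablePred (Adm u v)]
    (B : ℝ) (hB : 0 ≤ B)
    (hAdm : ∀ u v w, Adj u v → Adj u w → Adj v w →
       (Adm u v w ∨ Adm v u w ∨ Adm u w v ∨ Adm w u v ∨ Adm v w u ∨ Adm w v u))
    (hcap : ∀ u v, u ∈ P → v ∈ P → Adj u v → ((P.filter (fun w => Adm u v w)).card : ℝ) ≤ B) :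
    (((P ×ˢ P).filter (fun z => Adj z.1 z.2)).card : ℝ) ≤ (P.card:ℝ)^2/2 + 3*B*P.card := by
  classical
  set n := P.card with hn
  set E2 := (P ×ˢ P).filter (fun z => Adj z.1 z.2) with hE2
  set T3 := (P ×ˢ (P ×ˢ P)).filter
      (fun t : V × V × V => Adj t.1 t.2.1 ∧ Adj t.1 t.2.2 ∧ Adj t.2.1 t.2.2) with hT3
  set deg : V → ℕ := fun u => (P.filter (fun v => Adj u v)).card with hdeg
  set codeg : V × V → ℕ := fun z => (P.filter (fun w => Adj z.1 w ∧ Adj z.2 w)).card with hcodeg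
  have hmemE2 : ∀ z : V × V, z ∈ E2 ↔ (z.1 ∈ P ∧ z.2 ∈ P ∧ Adj z.1 z.2) := by
    intro z
    simp [hE2, Finset.mem_filter, Finset.mem_product, and_assoc]
  have hmemT3 : ∀ t : V × V × V, t ∈ T3 ↔ (t.1 ∈ P ∧ t.2.1 ∈ P ∧ t.2.2 ∈ P ∧
      Adj t.1 t.2.1 ∧ Adj t.1 t.2.2 ∧ Adj t.2.1 t.2.2) := by
    intro t
    simp [hT3, Finset.mem_filter, Finset.mem_product, and_assoc]
  -- m3 as fiberwise sum of codegrees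
  have hfib : T3.card = ∑ z ∈ E2, (T3.filter (fun t => (t.1, t.2.1) = z)).card := by
    apply Finset.card_eq_sum_card_fiberwise
    intro t ht
    rw [Finset.mem_coe, hmemT3] at ht
    rw [Finset.mem_coe, hmemE2]
    exact ⟨ht.1, ht.2.1, ht.2.2.2.1⟩
  have hfibcodeg : ∀ z ∈ E2, (T3.filter (fun t => (t.1, t.2.1) = z)).card = codeg z := by
    intro z hz
    rw [hmemE2] at hz
    apply Finset.card_nbij' (fun t => t.2.2) (fun w => (z.1, z.2, w))
    · intro t ht
      simp only [Finset.mem_coe, Finset.mem_filter] at ht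
      obtain ⟨ht3, hteq⟩ := ht
      rw [hmemT3] at ht3
      have h1 : t.1 = z.1 := by rw [← hteq]
      have h2 : t.2.1 = z.2 := by rw [← hteq]
      simp only [Finset.mem_coe, Finset.mem_filter]
      exact ⟨ht3.2.2.1, by rw [← h1]; exact ht3.2.2.2.2.1, by rw [← h2]; exact ht3.2.2.2.2.2⟩
    · intro w hw
      simp only [Finset.mem_coe, Finset.mem_filter] at hw
      rw [Finset.mem_coe]
      refine Finset.mem_filter.mpr ⟨(hmemT3 _).mpr ⟨hz.1, hz.2.1, hw.1, hz.2.2, hw.2.1, hw.2.2⟩, ?_⟩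
      simp
    · intro t ht
      simp only [Finset.mem_coe, Finset.mem_filter] at ht
      obtain ⟨_, hteq⟩ := ht
      have h1 : z.1 = t.1 := by rw [← hteq]
      have h2 : z.2 = t.2.1 := by rw [← hteq]
      rw [h1, h2]
    · intro w hw
      rfl
  have hm3 : (T3.card : ℝ) = ∑ z ∈ E2, (codeg z : ℝ) := by
    rw [hfib]
    push_cast
    exact Finset.sum_congr rfl (fun z hz => by rw [hfibcodeg z hz])
  -- codegree lower bound
  have hcodegLB : ∀ z ∈ E2, (deg z.1 : ℝ) + (deg z.2 : ℝ) - n ≤ (codeg z : ℝ) := by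
    intro z hz
    have hsplit : P.filter (fun w => Adj z.1 w ∧ Adj z.2 w)
        = (P.filter (fun w => Adj z.1 w)) ∩ (P.filter (fun w => Adj z.2 w)) := by
      rw [← Finset.filter_and]
    have hunion : ((P.filter (fun w => Adj z.1 w)) ∪ (P.filter (fun w => Adj z.2 w))).card ≤ n := by
      rw [hn]
      apply Finset.card_le_card
      intro w hw
      rcases Finset.mem_union.mp hw with h | h <;> exact Finset.mem_of_mem_filter _ h
    have := Finset.card_inter_add_card_union (P.filter (fun w => Adj z.1 w)) (P.filter (fun w => Adj z.2 w))
    have h2 : codeg z + ((P.filter (fun w => Adj z.1 w)) ∪ (P.filter (fun w => Adj z.2 w))).card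
        = deg z.1 + deg z.2 := by
      rw [hcodeg, hdeg]
      simp only
      rw [hsplit]
      exact this
    have h3 : (codeg z : ℝ) + (((P.filter (fun w => Adj z.1 w)) ∪ (P.filter (fun w => Adj z.2 w))).card : ℝ)
        = (deg z.1 : ℝ) + deg z.2 := by exact_mod_cast h2
    have h4 : (((P.filter (fun w => Adj z.1 w)) ∪ (P.filter (fun w => Adj z.2 w))).card : ℝ) ≤ n := by
      exact_mod_cast hunion
    linarith
  -- sum of degrees over edges
  have hsum1 : ∑ z ∈ E2, ((deg z.1 : ℝ) + (deg z.2 : ℝ)) = 2 * ∑ u ∈ P, (deg u : ℝ)^2 := by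
    rw [hE2, Finset.sum_filter, Finset.sum_product]
    have hinner : ∀ u ∈ P, ∑ v ∈ P, (if Adj u v then ((deg u : ℝ) + (deg v : ℝ)) else 0)
        = (deg u : ℝ)^2 + ∑ v ∈ P.filter (fun v => Adj u v), (deg v : ℝ) := by
      intro u hu
      rw [← Finset.sum_filter]
      rw [Finset.sum_add_distrib]
      congr 1
      rw [Finset.sum_const, hdeg]
      simp only
      rw [nsmul_eq_mul]
      ring
    rw [Finset.sum_congr rfl hinner, Finset.sum_add_distrib]
    have hswap : ∑ u ∈ P, ∑ v ∈ P.filter (fun v => Adj u v), (deg v : ℝ)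
        = ∑ v ∈ P, (deg v : ℝ)^2 := by
      have h1 : ∀ u ∈ P, ∑ v ∈ P.filter (fun v => Adj u v), (deg v : ℝ)
          = ∑ v ∈ P, (if Adj u v then (deg v : ℝ) else 0) := fun u hu => Finset.sum_filter _ _
      rw [Finset.sum_congr rfl h1, Finset.sum_comm]
      have h2 : ∀ v ∈ P, ∑ u ∈ P, (if Adj u v then (deg v : ℝ) else 0) = (deg v : ℝ)^2 := by
        intro v hv
        rw [← Finset.sum_filter, Finset.sum_const, nsmul_eq_mul]
        have : (P.filter (fun u => Adj u v)).card = deg v := by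
          rw [hdeg]
          simp only
          congr 1
          apply Finset.filter_congr
          intro u hu
          exact ⟨fun h => hsym u v h, fun h => hsym v u h⟩
        rw [this]; ring
      rw [Finset.sum_congr rfl h2]
    rw [hswap]; ring
  -- degree sum equals edge count
  have hdegsum : ∑ u ∈ P, (deg u : ℝ) = (E2.card : ℝ) := by
    have h1 : E2.card = ∑ u ∈ P, (E2.filter (fun z => z.1 = u)).card := by
      apply Finset.card_eq_sum_card_fiberwise
      intro z hz
      exact ((hmemE2 z).mp hz).1
    have h2 : ∀ u ∈ P, (E2.filter (fun z => z.1 = u)).card = (P.filter (fun v => Adj u v)).card := by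
      intro u hu
      apply Finset.card_nbij' (fun z => z.2) (fun v => (u, v))
      · intro z hz
        simp only [Finset.mem_coe, Finset.mem_filter] at hz
        obtain ⟨hz2, hzeq⟩ := hz
        rw [hmemE2] at hz2
        simp only [Finset.mem_coe, Finset.mem_filter]
        exact ⟨hz2.2.1, by rw [← hzeq]; exact hz2.2.2⟩
      · intro v hv
        simp only [Finset.mem_coe, Finset.mem_filter] at hv ⊢
        exact ⟨(hmemE2 _).mpr ⟨hu, hv.1, hv.2⟩, trivial⟩
      · intro z hz
        simp only [Finset.mem_coe, Finset.mem_filter] at hz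
        have h1 : u = z.1 := hz.2.symm
        rw [h1]
      · intro v hv
        rfl
    rw [h1]
    push_cast
    refine Finset.sum_congr rfl (fun u hu => ?_)
    rw [hdeg]
    simp only
    exact_mod_cast (h2 u hu).symm
  -- Cauchy-Schwarz
  have hCS : (E2.card : ℝ)^2 ≤ (n : ℝ) * ∑ u ∈ P, (deg u : ℝ)^2 := by
    rw [← hdegsum, hn]
    exact_mod_cast sq_sum_le_card_mul_sum_sq (s := P) (f := fun u => (deg u : ℝ))
  -- pattern map
  set S := T3.filter (fun t => Adm t.1 t.2.1 t.2.2) with hS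
  set φ : V × V × V → V × V × V := fun t =>
    if Adm t.1 t.2.1 t.2.2 then t
    else if Adm t.2.1 t.1 t.2.2 then (t.2.1, t.1, t.2.2)
    else if Adm t.1 t.2.2 t.2.1 then (t.1, t.2.2, t.2.1)
    else if Adm t.2.2 t.1 t.2.1 then (t.2.2, t.1, t.2.1)
    else if Adm t.2.1 t.2.2 t.1 then (t.2.1, t.2.2, t.1)
    else (t.2.2, t.2.1, t.1) with hφ
  have hφS : ∀ t ∈ T3, φ t ∈ S := by
    intro t ht
    obtain ⟨hP1, hP2, hP3, h12, h13, h23⟩ := (hmemT3 t).mp ht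
    have hd := hAdm t.1 t.2.1 t.2.2 h12 h13 h23
    rw [hφ]
    simp only
    split_ifs with c1 c2 c3 c4 c5
    · exact Finset.mem_filter.mpr ⟨ht, c1⟩
    · exact Finset.mem_filter.mpr ⟨(hmemT3 _).mpr ⟨hP2, hP1, hP3, hsym _ _ h12, h23, h13⟩, c2⟩
    · exact Finset.mem_filter.mpr ⟨(hmemT3 _).mpr ⟨hP1, hP3, hP2, h13, h12, hsym _ _ h23⟩, c3⟩
    · exact Finset.mem_filter.mpr ⟨(hmemT3 _).mpr ⟨hP3, hP1, hP2, hsym _ _ h13, hsym _ _ h23, h12⟩, c4⟩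
    · exact Finset.mem_filter.mpr ⟨(hmemT3 _).mpr ⟨hP2, hP3, hP1, h23, hsym _ _ h12, hsym _ _ h13⟩, c5⟩
    · refine Finset.mem_filter.mpr ⟨(hmemT3 _).mpr ⟨hP3, hP2, hP1, hsym _ _ h23, hsym _ _ h13, hsym _ _ h12⟩, ?_⟩
      simp only
      tauto
  have hm3S : (T3.card : ℝ) ≤ 6 * (S.card : ℝ) := by
    have h1 : T3.card = ∑ s ∈ T3.image φ, (T3.filter (fun t => φ t = s)).card :=
      Finset.card_eq_sum_card_fiberwise (fun t ht => Finset.mem_image_of_mem φ ht)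
    have h2 : ∀ s : V × V × V, (T3.filter (fun t => φ t = s)).card ≤ 6 := by
      intro s
      have hsub : T3.filter (fun t => φ t = s) ⊆
          ({(s.1, s.2.1, s.2.2), (s.2.1, s.1, s.2.2), (s.1, s.2.2, s.2.1),
            (s.2.2, s.1, s.2.1), (s.2.2, s.2.1, s.1), (s.2.1, s.2.2, s.1)} : Finset (V × V × V)) := by
        intro t ht
        obtain ⟨htT, hts⟩ := Finset.mem_filter.mp ht
        obtain ⟨a, b, c⟩ := t
        rw [hφ] at hts
        simp only at hts
        split_ifs at hts <;> subst hts <;> simp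
      refine (Finset.card_le_card hsub).trans ?_
      refine le_trans (Finset.card_insert_le _ _) ?_
      refine Nat.add_le_add_right ?_ 1
      refine le_trans (Finset.card_insert_le _ _) ?_
      refine Nat.add_le_add_right ?_ 1
      refine le_trans (Finset.card_insert_le _ _) ?_
      refine Nat.add_le_add_right ?_ 1
      refine le_trans (Finset.card_insert_le _ _) ?_
      refine Nat.add_le_add_right ?_ 1
      refine le_trans (Finset.card_insert_le _ _) ?_
      refine Nat.add_le_add_right ?_ 1
      simp
    have h3 : T3.card ≤ 6 * (T3.image φ).card := by
      rw [h1]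
      calc ∑ s ∈ T3.image φ, (T3.filter (fun t => φ t = s)).card
          ≤ ∑ s ∈ T3.image φ, 6 := Finset.sum_le_sum (fun s _ => h2 s)
        _ = 6 * (T3.image φ).card := by rw [Finset.sum_const, smul_eq_mul]; ring
    have h4 : (T3.image φ).card ≤ S.card := by
      apply Finset.card_le_card
      intro s hs
      obtain ⟨t, ht, rfl⟩ := Finset.mem_image.mp hs
      exact hφS t ht
    have : T3.card ≤ 6 * S.card := h3.trans (by omega)
    exact_mod_cast this
  have hSbound : (S.card : ℝ) ≤ B * (E2.card : ℝ) := by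
    have h1 : S.card = ∑ z ∈ E2, (S.filter (fun t => (t.1, t.2.1) = z)).card := by
      apply Finset.card_eq_sum_card_fiberwise
      intro t ht
      have ht3 := (hmemT3 t).mp (Finset.mem_of_mem_filter t ht)
      exact (hmemE2 _).mpr ⟨ht3.1, ht3.2.1, ht3.2.2.2.1⟩
    have h2 : ∀ z ∈ E2, ((S.filter (fun t => (t.1, t.2.1) = z)).card : ℝ) ≤ B := by
      intro z hz
      have hzm := (hmemE2 z).mp hz
      have hinj : (S.filter (fun t => (t.1, t.2.1) = z)).card
          ≤ (P.filter (fun w => Adm z.1 z.2 w)).card := by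
        apply Finset.card_le_card_of_injOn (fun t => t.2.2)
        · intro t ht
          simp only [Finset.mem_coe, Finset.mem_filter] at ht
          obtain ⟨htS, hteq⟩ := ht
          obtain ⟨htT, htA⟩ := Finset.mem_filter.mp htS
          have h1' : t.1 = z.1 := by rw [← hteq]
          have h2' : t.2.1 = z.2 := by rw [← hteq]
          rw [Finset.mem_coe]
          refine Finset.mem_filter.mpr ⟨((hmemT3 t).mp htT).2.2.1, ?_⟩
          rw [← h1', ← h2']
          exact htA
        · intro t ht t' ht' heq
          simp only [Finset.coe_filter, Set.mem_setOf_eq] at ht ht'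
          have e1 : t.1 = t'.1 := (congrArg Prod.fst ht.2).trans (congrArg Prod.fst ht'.2).symm
          have e2 : t.2.1 = t'.2.1 := (congrArg Prod.snd ht.2).trans (congrArg Prod.snd ht'.2).symm
          exact Prod.ext e1 (Prod.ext e2 heq)
      calc ((S.filter (fun t => (t.1, t.2.1) = z)).card : ℝ)
          ≤ ((P.filter (fun w => Adm z.1 z.2 w)).card : ℝ) := by exact_mod_cast hinj
        _ ≤ B := hcap z.1 z.2 hzm.1 hzm.2.1 hzm.2.2
    rw [h1]
    push_cast
    calc ∑ z ∈ E2, ((S.filter (fun t => (t.1, t.2.1) = z)).card : ℝ)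
        ≤ ∑ z ∈ E2, B := Finset.sum_le_sum h2
      _ = B * E2.card := by rw [Finset.sum_const, nsmul_eq_mul]; ring
  -- final arithmetic
  have hsum2 : ∑ z ∈ E2, ((deg z.1 : ℝ) + (deg z.2 : ℝ)) - (n:ℝ)*(E2.card:ℝ) ≤ (T3.card : ℝ) := by
    rw [hm3]
    have := Finset.sum_le_sum hcodegLB
    have hconst : ∑ _z ∈ E2, (n:ℝ) = (E2.card:ℝ) * n := by
      rw [Finset.sum_const, nsmul_eq_mul]
    have hsplit : ∑ z ∈ E2, ((deg z.1 : ℝ) + (deg z.2 : ℝ) - (n:ℝ))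
        = ∑ z ∈ E2, ((deg z.1 : ℝ) + (deg z.2 : ℝ)) - (E2.card:ℝ)*(n:ℝ) := by
      rw [Finset.sum_sub_distrib, hconst]
    rw [hsplit] at this
    linarith
  have hkey : 2*(E2.card:ℝ)^2 ≤ (n:ℝ)*(6*B*(E2.card:ℝ) + (n:ℝ)*(E2.card:ℝ)) := by
    have h1 : 2*∑ u ∈ P, (deg u : ℝ)^2 ≤ (T3.card : ℝ) + (n:ℝ)*(E2.card:ℝ) := by
      rw [← hsum1]; linarith
    have h2 : (T3.card : ℝ) ≤ 6*B*(E2.card:ℝ) := by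
      calc (T3.card : ℝ) ≤ 6 * (S.card : ℝ) := hm3S
        _ ≤ 6 * (B * (E2.card : ℝ)) := by linarith
        _ = 6*B*(E2.card:ℝ) := by ring
    have h3 : 2*(E2.card:ℝ)^2 ≤ (n:ℝ)*(2*∑ u ∈ P, (deg u : ℝ)^2) := by nlinarith [hCS]
    have hnn : (0:ℝ) ≤ (n:ℝ) := Nat.cast_nonneg n
    nlinarith [h3, h1, h2]
  rcases Nat.eq_zero_or_pos E2.card with h0 | hpos
  · rw [h0]
    push_cast
    positivity
  · have hm2pos : (0:ℝ) < (E2.card : ℝ) := by exact_mod_cast hpos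
    have h5 : (2*(E2.card:ℝ)) * (E2.card:ℝ) ≤ (6*B*(n:ℝ) + (n:ℝ)^2) * (E2.card:ℝ) := by
      nlinarith [hkey]
    have h6 := le_of_mul_le_mul_right h5 hm2pos
    linarith

/-- The number of unordered pairs `{p, q}` of distinct points of the finite set `P ⊂ ℝ²`
whose Euclidean distance lies in the set `S ⊆ ℝ`. -/
noncomputable def nearPairs (P : Finset (EuclideanSpace ℝ (Fin 2))) (S : Set ℝ) : ℕ :=
  Set.ncard {e : Sym2 (EuclideanSpace ℝ (Fin 2)) |
    ¬ e.IsDiag ∧ (∀ p ∈ e, p ∈ P) ∧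
      Sym2.lift ⟨fun p q => dist p q, fun _ _ => dist_comm _ _⟩ e ∈ S}

theorem nearly_equal_distances_plane_alpha (k : ℕ) (hk : 2 ≤ k)
    (δ : ℝ) (hδ : δ ∈ Set.Ioo (0:ℝ) 1) (α : ℝ) (hα : 1 ≤ α) :
    ∃ (n₀ : ℕ) (C : ℝ), 0 < C ∧
      ∀ (n : ℕ), n₀ ≤ n →
      ∀ (t : Fin k → ℝ), 1 ≤ t ⟨0, by omega⟩ → StrictMono t →
      (∀ l₁ l₂ l₃ : Fin k, l₁ ≤ l₂ → l₂ < l₃ →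
        t l₃ ∉ Set.Icc ((1 - δ) * (t l₁ + t l₂)) (t l₁ + t l₂ + 2 * α)) →
      ∀ (P : Finset (EuclideanSpace ℝ (Fin 2))), P.card = n →
        (∀ p ∈ P, ∀ q ∈ P, p ≠ q → 1 ≤ dist p q) →
        (nearPairs P (⋃ l : Fin k, Set.Icc (t l) (t l + α)) : ℝ) ≤ (n : ℝ)^2 / 4 + C * n := by
  classical
  obtain ⟨hδ0, hδ1⟩ := hδ
  set B : ℝ := (k:ℝ)^3 * cLam δ α with hB
  have hBnn : 0 ≤ B := by
    have := cLam_nonneg δ α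
    positivity
  refine ⟨0, (3/2)*B + 1, by positivity, ?_⟩
  intro n _ t ht1 hmono hgapf P hcard hsep
  set D : Set ℝ := ⋃ l : Fin k, Set.Icc (t l) (t l + α) with hD
  set Adj : Pt → Pt → Prop := fun p q => p ≠ q ∧ dist p q ∈ D with hAdj
  set Adm : Pt → Pt → Pt → Prop := fun u v w => ∃ a b c : Fin k, b ≤ c ∧ c ≤ a ∧
      dist u v ∈ Set.Icc (t a) (t a + α) ∧ dist w u ∈ Set.Icc (t b) (t b + α) ∧
      dist w v ∈ Set.Icc (t c) (t c + α) with hAdmDef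
  have ht_ge1 : ∀ l : Fin k, 1 ≤ t l := by
    intro l
    refine le_trans ht1 (hmono.monotone ?_)
    simp [Fin.le_def]
  have hsym : ∀ u v, Adj u v → Adj v u := by
    intro u v ⟨h1, h2⟩
    exact ⟨h1.symm, by rwa [dist_comm]⟩
  have hirr : ∀ u, ¬ Adj u u := fun u h => h.1 rfl
  have hAdmH : ∀ u v w : Pt, Adj u v → Adj u w → Adj v w →
      (Adm u v w ∨ Adm v u w ∨ Adm u w v ∨ Adm w u v ∨ Adm v w u ∨ Adm w v u) := by
    intro u v w huv huw hvw
    obtain ⟨a1, h1⟩ := Set.mem_iUnion.mp huv.2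
    obtain ⟨a2, h2⟩ := Set.mem_iUnion.mp huw.2
    obtain ⟨a3, h3⟩ := Set.mem_iUnion.mp hvw.2
    have h1' : dist v u ∈ Set.Icc (t a1) (t a1 + α) := by rwa [dist_comm]
    have h2' : dist w u ∈ Set.Icc (t a2) (t a2 + α) := by rwa [dist_comm]
    have h3' : dist w v ∈ Set.Icc (t a3) (t a3 + α) := by rwa [dist_comm]
    rw [hAdmDef]
    simp only
    rcases le_total a1 a2 with h12 | h12 <;> rcases le_total a1 a3 with h13 | h13 <;>
      rcases le_total a2 a3 with h23 | h23
    · exact Or.inr (Or.inr (Or.inr (Or.inr (Or.inl ⟨a3, a1, a2, h12, h23, h3, h1, h2⟩))))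
    · exact Or.inr (Or.inr (Or.inl ⟨a2, a1, a3, h13, h23, h2, h1', h3⟩))
    · exact Or.inr (Or.inr (Or.inr (Or.inr (Or.inl ⟨a3, a1, a2, h12, h23, h3, h1, h2⟩))))
    · exact Or.inr (Or.inr (Or.inr (Or.inl ⟨a2, a3, a1, h13, h12, h2', h3, h1'⟩)))
    · exact Or.inr (Or.inr (Or.inr (Or.inr (Or.inr ⟨a3, a2, a1, h12, h13, h3', h2, h1⟩))))
    · exact Or.inr (Or.inr (Or.inr (Or.inr (Or.inr ⟨a3, a2, a1, h12, h13, h3', h2, h1⟩))))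
    · exact Or.inl ⟨a1, a2, a3, h23, h13, h1, h2', h3'⟩
    · exact Or.inr (Or.inl ⟨a1, a3, a2, h23, h12, h1', h3', h2'⟩)
  have hcapH : ∀ u v : Pt, u ∈ P → v ∈ P → Adj u v →
      ((P.filter (fun w => Adm u v w)).card : ℝ) ≤ B := by
    intro u v hu hv huv
    have hsub : P.filter (fun w => Adm u v w) ⊆
        (Finset.univ : Finset (Fin k × Fin k × Fin k)).biUnion (fun q =>
          P.filter (fun w => q.2.1 ≤ q.2.2 ∧ q.2.2 ≤ q.1 ∧
            dist u v ∈ Set.Icc (t q.1) (t q.1 + α) ∧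
            dist w u ∈ Set.Icc (t q.2.1) (t q.2.1 + α) ∧
            dist w v ∈ Set.Icc (t q.2.2) (t q.2.2 + α))) := by
      intro w hw
      obtain ⟨hwP, a, b, c, hbc, hca, hd1, hd2, hd3⟩ := Finset.mem_filter.mp hw
      exact Finset.mem_biUnion.mpr ⟨(a, b, c), Finset.mem_univ _,
        Finset.mem_filter.mpr ⟨hwP, hbc, hca, hd1, hd2, hd3⟩⟩
    have hterm : ∀ q : Fin k × Fin k × Fin k,
        ((P.filter (fun w => q.2.1 ≤ q.2.2 ∧ q.2.2 ≤ q.1 ∧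
            dist u v ∈ Set.Icc (t q.1) (t q.1 + α) ∧
            dist w u ∈ Set.Icc (t q.2.1) (t q.2.1 + α) ∧
            dist w v ∈ Set.Icc (t q.2.2) (t q.2.2 + α))).card : ℝ) ≤ cLam δ α := by
      rintro ⟨a, b, c⟩
      by_cases hcond : b ≤ c ∧ c ≤ a ∧ dist u v ∈ Set.Icc (t a) (t a + α)
      · obtain ⟨hbc, hca, hduv⟩ := hcond
        have hgap : t c = t a ∨ t a < (1-δ)*(t b + t c) ∨ t b + t c + 2*α < t a := by
          rcases eq_or_lt_of_le hca with he | hlt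
          · exact Or.inl (by rw [he])
          · have := hgapf b c a hbc hlt
            rw [Set.mem_Icc] at this
            push_neg at this
            rcases lt_or_ge (t a) ((1-δ) * (t b + t c)) with h | h
            · exact Or.inr (Or.inl h)
            · exact Or.inr (Or.inr (this h))
        refine le_trans (le_of_eq rfl) ?_
        apply cap δ α (t b) (t c) (t a) hδ0 hδ1 hα (ht_ge1 b) (hmono.monotone hbc)
          (hmono.monotone hca) hgap u v hduv
        · intro p hp q hq hne
          exact hsep p (Finset.mem_of_mem_filter p hp) q (Finset.mem_of_mem_filter q hq) hne
        · intro w hw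
          have := (Finset.mem_filter.mp hw).2
          exact ⟨this.2.2.2.1, this.2.2.2.2⟩
      · have hempty : P.filter (fun w => b ≤ c ∧ c ≤ a ∧
            dist u v ∈ Set.Icc (t a) (t a + α) ∧
            dist w u ∈ Set.Icc (t b) (t b + α) ∧
            dist w v ∈ Set.Icc (t c) (t c + α)) = ∅ := by
          rw [Finset.filter_eq_empty_iff]
          intro w _ hcon
          exact hcond ⟨hcon.1, hcon.2.1, hcon.2.2.1⟩
        rw [hempty]
        simpa using cLam_nonneg δ α
    have h1 : ((P.filter (fun w => Adm u v w)).card : ℝ) ≤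
        ∑ q : Fin k × Fin k × Fin k, ((P.filter (fun w => q.2.1 ≤ q.2.2 ∧ q.2.2 ≤ q.1 ∧
            dist u v ∈ Set.Icc (t q.1) (t q.1 + α) ∧
            dist w u ∈ Set.Icc (t q.2.1) (t q.2.1 + α) ∧
            dist w v ∈ Set.Icc (t q.2.2) (t q.2.2 + α))).card : ℝ) := by
      have := (Finset.card_le_card hsub).trans (Finset.card_biUnion_le)
      exact_mod_cast this
    refine h1.trans ?_
    have h2 : ∑ q : Fin k × Fin k × Fin k, ((P.filter (fun w => q.2.1 ≤ q.2.2 ∧ q.2.2 ≤ q.1 ∧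
            dist u v ∈ Set.Icc (t q.1) (t q.1 + α) ∧
            dist w u ∈ Set.Icc (t q.2.1) (t q.2.1 + α) ∧
            dist w v ∈ Set.Icc (t q.2.2) (t q.2.2 + α))).card : ℝ)
        ≤ ∑ _q : Fin k × Fin k × Fin k, cLam δ α :=
      Finset.sum_le_sum (fun q _ => hterm q)
    refine h2.trans ?_
    rw [Finset.sum_const, nsmul_eq_mul]
    have hcardq : (Finset.univ : Finset (Fin k × Fin k × Fin k)).card = k^3 := by
      simp [Finset.card_univ]
      ring
    rw [hcardq, hB]
    push_cast
    ring_nf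
    exact le_refl _
  have hmain := count_main P Adj hsym hirr Adm B hBnn hAdmH hcapH
  -- bridge nearPairs to ordered pairs
  set E2 := (P ×ˢ P).filter (fun z : Pt × Pt => Adj z.1 z.2) with hE2
  set F := P.sym2.filter (fun e => ¬ e.IsDiag ∧
      Sym2.lift ⟨fun p q => dist p q, fun _ _ => dist_comm _ _⟩ e ∈ D) with hF
  have hnp : nearPairs P D = F.card := by
    rw [nearPairs, ← Set.ncard_coe_finset F]
    congr 1
    ext e
    induction e using Sym2.ind with
    | _ p q =>
      simp only [Set.mem_setOf_eq, Finset.coe_filter, Finset.mem_sym2_iff, hF, Finset.mem_filter]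
      constructor
      · rintro ⟨h1, h2, h3⟩
        exact ⟨fun a ha => h2 a ha, h1, h3⟩
      · rintro ⟨h2, h1, h3⟩
        exact ⟨h1, fun a ha => h2 a ha, h3⟩
  have hbridge : 2 * (F.card : ℝ) ≤ (E2.card : ℝ) := by
    set g : Pt × Pt → Sym2 Pt := fun z => s(z.1, z.2) with hg
    have h1 : E2.card = ∑ e ∈ E2.image g, (E2.filter (fun z => g z = e)).card :=
      Finset.card_eq_sum_card_fiberwise (fun z hz => Finset.mem_image_of_mem g hz)
    have hFsub : F ⊆ E2.image g := by
      intro e he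
      induction e using Sym2.ind with
      | _ p q =>
        rw [hF, Finset.mem_filter, Finset.mk_mem_sym2_iff] at he
        obtain ⟨⟨hp, hq⟩, hnd, hdist⟩ := he
        have hne : p ≠ q := by
          intro h
          exact hnd (by rw [h]; exact Sym2.mk_isDiag_iff.mpr rfl)
        refine Finset.mem_image.mpr ⟨(p, q), ?_, rfl⟩
        rw [hE2, Finset.mem_filter, Finset.mem_product]
        refine ⟨⟨hp, hq⟩, hne, ?_⟩
        rwa [Sym2.lift_mk] at hdist
    have h2 : ∀ e ∈ F, 2 ≤ (E2.filter (fun z => g z = e)).card := by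
      intro e he
      induction e using Sym2.ind with
      | _ p q =>
        rw [hF, Finset.mem_filter, Finset.mk_mem_sym2_iff] at he
        obtain ⟨⟨hp, hq⟩, hnd, hdist⟩ := he
        have hne : p ≠ q := by
          intro h
          exact hnd (by rw [h]; exact Sym2.mk_isDiag_iff.mpr rfl)
        have hdm : dist p q ∈ D := by rwa [Sym2.lift_mk] at hdist
        have hmem1 : (p, q) ∈ E2.filter (fun z => g z = s(p, q)) := by
          rw [Finset.mem_filter, hE2, Finset.mem_filter, Finset.mem_product]
          exact ⟨⟨⟨hp, hq⟩, hne, hdm⟩, rfl⟩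
        have hmem2 : (q, p) ∈ E2.filter (fun z => g z = s(p, q)) := by
          rw [Finset.mem_filter, hE2, Finset.mem_filter, Finset.mem_product]
          refine ⟨⟨⟨hq, hp⟩, hne.symm, by rwa [dist_comm]⟩, ?_⟩
          exact Sym2.eq_swap
        have hpair : ({(p, q), (q, p)} : Finset (Pt × Pt)) ⊆ E2.filter (fun z => g z = s(p, q)) := by
          intro x hx
          rcases Finset.mem_insert.mp hx with h | h
          · rw [h]; exact hmem1
          · rw [Finset.mem_singleton.mp h]; exact hmem2
        have hpc : ({(p, q), (q, p)} : Finset (Pt × Pt)).card = 2 := by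
          rw [Finset.card_insert_of_notMem, Finset.card_singleton]
          simp only [Finset.mem_singleton]
          intro h
          exact hne (congrArg Prod.fst h)
        calc 2 = ({(p, q), (q, p)} : Finset (Pt × Pt)).card := hpc.symm
          _ ≤ _ := Finset.card_le_card hpair
    have h3 : 2 * F.card ≤ E2.card := by
      rw [h1]
      calc 2 * F.card = ∑ _e ∈ F, 2 := by rw [Finset.sum_const, smul_eq_mul]; ring
        _ ≤ ∑ e ∈ F, (E2.filter (fun z => g z = e)).card := Finset.sum_le_sum h2
        _ ≤ ∑ e ∈ E2.image g, (E2.filter (fun z => g z = e)).card :=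
            Finset.sum_le_sum_of_subset hFsub
    exact_mod_cast h3
  rw [hnp]
  rw [hcard] at hmain
  have hnn : (0:ℝ) ≤ n := Nat.cast_nonneg n
  nlinarith [hbridge, hmain]
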